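/- arXiv:1709.10368 — 2 statements merged into one kernel-verified Lean document; each statement's English description precedes it below -/
import Mathlib

section
/- Let f and g be two convex, non-decreasing, Lipschitz functions on [0,∞), with g strictly convex and differentiable. Define ψ(q₁,q₂) = f(q₁) + g(q₂) − q₁q₂ for q₁,q₂ ≥ 0. Then sup_{q₁≥0} inf_{q₂≥0} ψ(q₁,q₂) = sup_{q₂≥0} inf_{q₁≥0} ψ(q₁,q₂). -/
open Set

namespace SupInfAux

lemma lip_upper {K : NNReal} {f : ℝ → ℝ} (hf : LipschitzOnWith K f (Ici 0))
    {x : ℝ} (hx : 0 ≤ x) : f x ≤ f 0 + K * x := by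
  have h := hf.dist_le_mul x (mem_Ici.2 hx) 0 (mem_Ici.2 le_rfl)
  rw [Real.dist_eq, Real.dist_eq, sub_zero, abs_of_nonneg hx] at h
  linarith [le_abs_self (f x - f 0)]

lemma not_bddBelow_aux {K : NNReal} {f : ℝ → ℝ} (hlip : LipschitzOnWith K f (Ici 0))
    {c C : ℝ} (hc : (K : ℝ) < c) :
    ¬ BddBelow (Set.range fun q1 : {q : ℝ // 0 ≤ q} => f q1.1 + C - q1.1 * c) := by
  rintro ⟨b, hbd⟩
  set q : ℝ := max 0 ((f 0 + C - b + 1) / (c - K)) with hqdef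
  have hq0 : 0 ≤ q := le_max_left _ _
  have hcK : (0:ℝ) < c - K := by linarith
  have h1 : f q ≤ f 0 + K * q := lip_upper hlip hq0
  have h2 : f 0 + C - b + 1 ≤ q * (c - K) := by
    have hle : (f 0 + C - b + 1) / (c - K) ≤ q := le_max_right _ _
    calc f 0 + C - b + 1 = ((f 0 + C - b + 1) / (c - K)) * (c - K) := by field_simp
      _ ≤ q * (c - K) := mul_le_mul_of_nonneg_right hle hcK.le
  have h3 : b ≤ f q + C - q * c := hbd ⟨⟨q, hq0⟩, rfl⟩
  nlinarith

lemma exists_subgradient {K : NNReal} {f : ℝ → ℝ}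
    (hconv : ConvexOn ℝ (Ici 0) f) (hmono : MonotoneOn f (Ici 0))
    (hlip : LipschitzOnWith K f (Ici 0)) {q : ℝ} (hq : 0 ≤ q) :
    ∃ s : ℝ, 0 ≤ s ∧ ∀ x, 0 ≤ x → f q + s * (x - q) ≤ f x := by
  rcases eq_or_lt_of_le hq with rfl | hq0
  · exact ⟨0, le_rfl, fun x hx => by
      simpa using hmono (mem_Ici.2 le_rfl) (mem_Ici.2 hx) hx⟩
  · set S := (fun x => (f q - f x) / (q - x)) '' Ico (0:ℝ) q with hS
    have hne : S.Nonempty := ⟨_, ⟨0, ⟨le_rfl, hq0⟩, rfl⟩⟩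
    have hbdd : BddAbove S := by
      refine ⟨K, ?_⟩
      rintro _ ⟨x, ⟨hx0, hxq⟩, rfl⟩
      rw [div_le_iff₀ (by linarith)]
      have h := hlip.dist_le_mul q (mem_Ici.2 hq) x (mem_Ici.2 hx0)
      rw [Real.dist_eq, Real.dist_eq, abs_of_pos (show (0:ℝ) < q - x by linarith)] at h
      linarith [le_abs_self (f q - f x)]
    set s := sSup S with hsdef
    have hel : ∀ x, 0 ≤ x → x < q → (f q - f x) / (q - x) ≤ s :=
      fun x hx0 hxq => le_csSup hbdd ⟨x, ⟨hx0, hxq⟩, rfl⟩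
    have hs0 : 0 ≤ s := by
      have hm : f 0 ≤ f q := hmono (mem_Ici.2 le_rfl) (mem_Ici.2 hq) hq
      have h0 : (0:ℝ) ≤ (f q - f 0) / (q - 0) := div_nonneg (by linarith) (by linarith)
      exact h0.trans (hel 0 le_rfl hq0)
    refine ⟨s, hs0, fun x hx => ?_⟩
    rcases lt_trichotomy x q with hxq | rfl | hqx
    · have h := hel x hx hxq
      rw [div_le_iff₀ (by linarith)] at h
      have he : s * (x - q) = -(s * (q - x)) := by ring
      linarith
    · simp
    · have hle : s ≤ (f x - f q) / (x - q) := by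
        apply csSup_le hne
        rintro _ ⟨x', ⟨hx'0, hx'q⟩, rfl⟩
        exact hconv.slope_mono_adjacent (mem_Ici.2 hx'0) (mem_Ici.2 hx) hx'q hqx
      rw [le_div_iff₀ (by linarith)] at hle
      linarith

lemma master (f g : ℝ → ℝ) (Kf Kg : NNReal)
    (hf_conv : ConvexOn ℝ (Ici 0) f) (hf_mono : MonotoneOn f (Ici 0))
    (hf_lip : LipschitzOnWith Kf f (Ici 0))
    (hg_conv : ConvexOn ℝ (Ici 0) g) (hg_mono : MonotoneOn g (Ici 0))
    (hg_lip : LipschitzOnWith Kg g (Ici 0)) :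
    (⨆ q1 : {q : ℝ // 0 ≤ q}, ⨅ q2 : {q : ℝ // 0 ≤ q},
        (f q1.1 + g q2.1 - q1.1 * q2.1))
      ≤ (⨆ q2 : {q : ℝ // 0 ≤ q}, ⨅ q1 : {q : ℝ // 0 ≤ q},
        (f q1.1 + g q2.1 - q1.1 * q2.1)) := by
  haveI : Nonempty {q : ℝ // 0 ≤ q} := ⟨⟨0, le_rfl⟩⟩
  -- the right-hand side family is bounded above
  have hB : BddAbove (Set.range fun q2 : {q : ℝ // 0 ≤ q} =>
      ⨅ q1 : {q : ℝ // 0 ≤ q}, (f q1.1 + g q2.1 - q1.1 * q2.1)) := by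
    refine ⟨max 0 (f 0 + (g 0 + Kg * Kf)), ?_⟩
    rintro _ ⟨q2, rfl⟩
    dsimp only
    by_cases hbb : BddBelow (Set.range fun q1 : {q : ℝ // 0 ≤ q} =>
        (f q1.1 + g q2.1 - q1.1 * q2.1))
    · rcases le_or_gt q2.1 (Kf : ℝ) with h | h
      · have h1 : (⨅ q1 : {q : ℝ // 0 ≤ q}, (f q1.1 + g q2.1 - q1.1 * q2.1))
            ≤ f (0:ℝ) + g q2.1 - 0 * q2.1 := ciInf_le hbb ⟨0, le_rfl⟩
        have h2 : g q2.1 ≤ g 0 + Kg * q2.1 := lip_upper hg_lip q2.2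
        have h3 : (Kg : ℝ) * q2.1 ≤ Kg * Kf := mul_le_mul_of_nonneg_left h Kg.coe_nonneg
        have h4 : f (0:ℝ) + g q2.1 - 0 * q2.1 ≤ f 0 + (g 0 + Kg * Kf) := by
          have : (0:ℝ) * q2.1 = 0 := by ring
          linarith
        exact le_trans (h1.trans h4) (le_max_right _ _)
      · exact absurd hbb (not_bddBelow_aux hf_lip h)
    · rw [Real.iInf_of_not_bddBelow hbb]
      exact le_max_left _ _
  refine ciSup_le fun q1 => ?_
  by_cases hbb : BddBelow (Set.range fun q2 : {q : ℝ // 0 ≤ q} =>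
      (f q1.1 + g q2.1 - q1.1 * q2.1))
  · obtain ⟨s, hs0, hsub⟩ := exists_subgradient hf_conv hf_mono hf_lip q1.2
    have h1 : (⨅ q2 : {q : ℝ // 0 ≤ q}, (f q1.1 + g q2.1 - q1.1 * q2.1))
        ≤ f q1.1 + g s - q1.1 * s := ciInf_le hbb ⟨s, hs0⟩
    have h2 : f q1.1 + g s - q1.1 * s
        ≤ ⨅ q1' : {q : ℝ // 0 ≤ q}, (f q1'.1 + g s - q1'.1 * s) := by
      refine le_ciInf fun q1' => ?_
      have h := hsub q1'.1 q1'.2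
      nlinarith [h]
    have h3 : (⨅ q1' : {q : ℝ // 0 ≤ q},
          (f q1'.1 + g ((⟨s, hs0⟩ : {q : ℝ // 0 ≤ q}).1)
            - q1'.1 * (⟨s, hs0⟩ : {q : ℝ // 0 ≤ q}).1))
        ≤ ⨆ q2 : {q : ℝ // 0 ≤ q}, ⨅ q1' : {q : ℝ // 0 ≤ q},
            (f q1'.1 + g q2.1 - q1'.1 * q2.1) := le_ciSup hB ⟨s, hs0⟩
    exact h1.trans (h2.trans h3)
  · rw [Real.iInf_of_not_bddBelow hbb]
    have hc : (Kf : ℝ) < (Kf : ℝ) + 1 := by linarith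
    have hpos : (0:ℝ) ≤ (Kf : ℝ) + 1 := by positivity
    calc (0:ℝ)
        = ⨅ q1' : {q : ℝ // 0 ≤ q},
            (f q1'.1 + g ((⟨(Kf : ℝ) + 1, hpos⟩ : {q : ℝ // 0 ≤ q}).1)
              - q1'.1 * (⟨(Kf : ℝ) + 1, hpos⟩ : {q : ℝ // 0 ≤ q}).1) :=
          (Real.iInf_of_not_bddBelow (not_bddBelow_aux hf_lip hc)).symm
      _ ≤ _ := le_ciSup hB _

end SupInfAux

theorem supInf_eq_infSup
    (f g g' : ℝ → ℝ)
    (hf_conv : ConvexOn ℝ (Ici 0) f) (hf_mono : MonotoneOn f (Ici 0))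
    (hf_lip : ∃ K : NNReal, LipschitzOnWith K f (Ici 0))
    (hg_conv : ConvexOn ℝ (Ici 0) g) (hg_sconv : StrictConvexOn ℝ (Ici 0) g)
    (hg_mono : MonotoneOn g (Ici 0))
    (hg_lip : ∃ K : NNReal, LipschitzOnWith K g (Ici 0))
    (hg_deriv : ∀ x ∈ Ici (0:ℝ), HasDerivWithinAt g (g' x) (Ici 0) x) :
    (⨆ q1 : {q : ℝ // 0 ≤ q}, ⨅ q2 : {q : ℝ // 0 ≤ q},
        (f q1.1 + g q2.1 - q1.1 * q2.1))
      = (⨆ q2 : {q : ℝ // 0 ≤ q}, ⨅ q1 : {q : ℝ // 0 ≤ q},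
        (f q1.1 + g q2.1 - q1.1 * q2.1)) := by
  obtain ⟨Kf, hKf⟩ := hf_lip
  obtain ⟨Kg, hKg⟩ := hg_lip
  have h1 := SupInfAux.master f g Kf Kg hf_conv hf_mono hKf hg_conv hg_mono hKg
  have h2 := SupInfAux.master g f Kg Kf hg_conv hg_mono hKg hf_conv hf_mono hKf
  have e1 : (⨆ q2 : {q : ℝ // 0 ≤ q}, ⨅ q1 : {q : ℝ // 0 ≤ q},
        (f q1.1 + g q2.1 - q1.1 * q2.1))
      = (⨆ q1 : {q : ℝ // 0 ≤ q}, ⨅ q2 : {q : ℝ // 0 ≤ q},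
        (g q1.1 + f q2.1 - q1.1 * q2.1)) :=
    iSup_congr fun a => iInf_congr fun b => by ring
  have e2 : (⨆ q1 : {q : ℝ // 0 ≤ q}, ⨅ q2 : {q : ℝ // 0 ≤ q},
        (f q1.1 + g q2.1 - q1.1 * q2.1))
      = (⨆ q2 : {q : ℝ // 0 ≤ q}, ⨅ q1 : {q : ℝ // 0 ≤ q},
        (g q1.1 + f q2.1 - q1.1 * q2.1)) :=
    iSup_congr fun a => iInf_congr fun b => by ring
  refine le_antisymm h1 ?_
  rw [e1, e2]
  exact h2
end

section
/- In the sup-inf formula of Lemma 'sup_inf', the inequality direction: the constrained supremum over triples satisfying the three fixed-point equations q₁=f₁'(q₂q₃), q₂=f₂'(q₁q₃), q₃=f₃'(q₁q₂) of f₁(q₂q₃)+f₂(q₁q₃)+f₃(q₁q₂)−2q₁q₂q₃ is at most sup_{q₃≥0} inf_{r≥0}[ f₃(r) + sup_{q₁≥0} inf_{q₂≥0}{f₁(q₂q₃)+f₂(q₁q₃)−q₁q₂q₃} − r q₃ ]. -/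
open Set

instance : Nonempty {q : ℝ // 0 ≤ q} := ⟨⟨0, le_refl 0⟩⟩

/-- Subgradient inequality for a convex function on `Ici 0`. -/
lemma subgrad {f : ℝ → ℝ} {d x y : ℝ} (hf : ConvexOn ℝ (Ici 0) f)
    (hx : 0 ≤ x) (hy : 0 ≤ y) (hd : HasDerivWithinAt f d (Ici 0) x) :
    f x + d * (y - x) ≤ f y := by
  rcases lt_trichotomy x y with h | h | h
  · have := hf.le_slope_of_hasDerivWithinAt hx hy h hd
    rw [slope_def_field] at this
    have hxy : 0 < y - x := by linarith
    rw [le_div_iff₀ hxy] at this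
    linarith
  · subst h; simp
  · have := hf.slope_le_of_hasDerivWithinAt hy hx h hd
    rw [slope_def_field] at this
    have hxy : 0 < x - y := by linarith
    rw [div_le_iff₀ hxy] at this
    nlinarith

/-- Lipschitz upper bound. -/
lemma lip_ub {f : ℝ → ℝ} {K : NNReal} (hf : LipschitzOnWith K f (Ici 0)) {x : ℝ}
    (hx : 0 ≤ x) : f x ≤ f 0 + K * x := by
  have := hf.dist_le_mul x (mem_Ici.2 hx) 0 (mem_Ici.2 (le_refl 0))
  rw [Real.dist_eq, Real.dist_eq, sub_zero, abs_of_nonneg hx] at this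
  have := abs_le.1 this
  linarith [this.2]

/-- A function on nonnegative reals that is eventually dominated by a line with negative
slope is not bounded below. -/
lemma not_bddBelow_of_le (F : {q : ℝ // 0 ≤ q} → ℝ) (c d : ℝ) (hd : d < 0)
    (h : ∀ r : {q : ℝ // 0 ≤ q}, F r ≤ c + d * r.1) : ¬ BddBelow (Set.range F) := by
  rintro ⟨b, hb⟩
  set r0 : ℝ := max 0 ((b - c) / d + 1) with hr0
  have hr0' : 0 ≤ r0 := le_max_left _ _
  have hrle : (b - c) / d + 1 ≤ r0 := le_max_right _ _
  have h1 : b ≤ F ⟨r0, hr0'⟩ := hb (Set.mem_range_self _)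
  have h2 : F ⟨r0, hr0'⟩ ≤ c + d * r0 := h _
  have h3 : d * r0 ≤ d * ((b - c) / d + 1) := mul_le_mul_of_nonpos_left hrle hd.le
  have h4 : d * ((b - c) / d) = b - c := mul_div_cancel₀ _ hd.ne
  have h5 : d * ((b - c) / d + 1) = (b - c) + d := by rw [mul_add, h4, mul_one]
  linarith

theorem sup_inf_three_functions_easy_direction
    (f1 f2 f3 f1' f2' f3' : ℝ → ℝ)
    (h1_conv : ConvexOn ℝ (Ici 0) f1) (h1_sconv : StrictConvexOn ℝ (Ici 0) f1)
    (h1_mono : MonotoneOn f1 (Ici 0))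
    (h1_lip : ∃ K : NNReal, LipschitzOnWith K f1 (Ici 0))
    (h1_deriv : ∀ x ∈ Ici (0:ℝ), HasDerivWithinAt f1 (f1' x) (Ici 0) x)
    (h2_conv : ConvexOn ℝ (Ici 0) f2) (h2_sconv : StrictConvexOn ℝ (Ici 0) f2)
    (h2_mono : MonotoneOn f2 (Ici 0))
    (h2_lip : ∃ K : NNReal, LipschitzOnWith K f2 (Ici 0))
    (h2_deriv : ∀ x ∈ Ici (0:ℝ), HasDerivWithinAt f2 (f2' x) (Ici 0) x)
    (h3_conv : ConvexOn ℝ (Ici 0) f3) (h3_sconv : StrictConvexOn ℝ (Ici 0) f3)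
    (h3_mono : MonotoneOn f3 (Ici 0))
    (h3_lip : ∃ K : NNReal, LipschitzOnWith K f3 (Ici 0))
    (h3_deriv : ∀ x ∈ Ici (0:ℝ), HasDerivWithinAt f3 (f3' x) (Ici 0) x) :
    sSup {y : ℝ | ∃ q1 q2 q3 : ℝ, 0 ≤ q1 ∧ 0 ≤ q2 ∧ 0 ≤ q3 ∧
          q1 = f1' (q2 * q3) ∧ q2 = f2' (q1 * q3) ∧ q3 = f3' (q1 * q2) ∧
          y = f1 (q2 * q3) + f2 (q1 * q3) + f3 (q1 * q2) - 2 * (q1 * q2 * q3)}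
      ≤ ⨆ q3 : {q : ℝ // 0 ≤ q}, ⨅ r : {q : ℝ // 0 ≤ q},
          (f3 r.1
            + (⨆ q1 : {q : ℝ // 0 ≤ q}, ⨅ q2 : {q : ℝ // 0 ≤ q},
                (f1 (q2.1 * q3.1) + f2 (q1.1 * q3.1) - q1.1 * q2.1 * q3.1))
            - r.1 * q3.1) := by
  obtain ⟨K1, hK1⟩ := h1_lip
  obtain ⟨K2, hK2⟩ := h2_lip
  obtain ⟨K3, hK3⟩ := h3_lip
  set S : ℝ → ℝ := fun t => ⨆ q1 : {q : ℝ // 0 ≤ q}, ⨅ q2 : {q : ℝ // 0 ≤ q},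
      (f1 (q2.1 * t) + f2 (q1.1 * t) - q1.1 * q2.1 * t) with hS
  set g : ℝ → ℝ := fun t => ⨅ r : {q : ℝ // 0 ≤ q}, (f3 r.1 + S t - r.1 * t) with hg
  -- inner infimum is uniformly bounded above
  have hSub1 : ∀ t : ℝ, 0 ≤ t → ∀ q1 : {q : ℝ // 0 ≤ q},
      (⨅ q2 : {q : ℝ // 0 ≤ q}, (f1 (q2.1 * t) + f2 (q1.1 * t) - q1.1 * q2.1 * t))
        ≤ max 0 (f1 0 + f2 0 + (K2 : ℝ) * (K1 : ℝ) * t) := by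
    intro t ht q1
    by_cases hb : BddBelow (Set.range fun q2 : {q : ℝ // 0 ≤ q} =>
        f1 (q2.1 * t) + f2 (q1.1 * t) - q1.1 * q2.1 * t)
    · by_cases hle : q1.1 * t ≤ (K1 : ℝ) * t
      · have h0 : (⨅ q2 : {q : ℝ // 0 ≤ q},
            (f1 (q2.1 * t) + f2 (q1.1 * t) - q1.1 * q2.1 * t))
              ≤ f1 ((0:ℝ) * t) + f2 (q1.1 * t) - q1.1 * 0 * t :=
          ciInf_le hb ⟨0, le_refl 0⟩
        have h1 : f2 (q1.1 * t) ≤ f2 0 + (K2 : ℝ) * (q1.1 * t) :=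
          lip_ub hK2 (mul_nonneg q1.2 ht)
        have h2 : (K2 : ℝ) * (q1.1 * t) ≤ (K2 : ℝ) * ((K1 : ℝ) * t) :=
          mul_le_mul_of_nonneg_left hle K2.coe_nonneg
        have h3 : f1 0 + f2 0 + (K2 : ℝ) * (K1 : ℝ) * t
            ≤ max 0 (f1 0 + f2 0 + (K2 : ℝ) * (K1 : ℝ) * t) := le_max_right _ _
        simp only [zero_mul, mul_zero] at h0
        nlinarith
      · exfalso
        push_neg at hle
        have ht' : 0 < t := by
          rcases ht.lt_or_eq with h | h
          · exact h
          · exfalso; rw [← h] at hle; simp at hle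
        have hq1 : (K1 : ℝ) < q1.1 := lt_of_mul_lt_mul_right hle ht
        refine not_bddBelow_of_le _ (f1 0 + f2 (q1.1 * t)) (((K1 : ℝ) - q1.1) * t)
          (by nlinarith) (fun q2 => ?_) hb
        have := lip_ub hK1 (mul_nonneg q2.2 ht)
        nlinarith
    · rw [Real.iInf_of_not_bddBelow hb]
      exact le_max_left _ _
  have hSbddA : ∀ t : ℝ, 0 ≤ t → BddAbove (Set.range fun q1 : {q : ℝ // 0 ≤ q} =>
      ⨅ q2 : {q : ℝ // 0 ≤ q}, (f1 (q2.1 * t) + f2 (q1.1 * t) - q1.1 * q2.1 * t)) := by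
    intro t ht
    exact ⟨max 0 (f1 0 + f2 0 + (K2 : ℝ) * (K1 : ℝ) * t), by
      rintro x ⟨q1, rfl⟩; exact hSub1 t ht q1⟩
  have hSbound : ∀ t : ℝ, 0 ≤ t → S t ≤ max 0 (f1 0 + f2 0 + (K2 : ℝ) * (K1 : ℝ) * t) :=
    fun t ht => ciSup_le (hSub1 t ht)
  -- g is uniformly bounded above
  set C : ℝ := max 0 (f3 0 + max 0 (f1 0 + f2 0 + (K2 : ℝ) * (K1 : ℝ) * (K3 : ℝ))) with hC
  have hgbound : ∀ t : ℝ, 0 ≤ t → g t ≤ C := by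
    intro t ht
    by_cases hb : BddBelow (Set.range fun r : {q : ℝ // 0 ≤ q} => f3 r.1 + S t - r.1 * t)
    · have ht3 : t ≤ (K3 : ℝ) := by
        by_contra h'
        push_neg at h'
        refine not_bddBelow_of_le _ (f3 0 + S t) ((K3 : ℝ) - t) (by linarith)
          (fun r => ?_) hb
        have := lip_ub hK3 r.2
        nlinarith
      have h0 : g t ≤ f3 (0:ℝ) + S t - 0 * t := ciInf_le hb ⟨0, le_refl 0⟩
      have h1 : S t ≤ max 0 (f1 0 + f2 0 + (K2 : ℝ) * (K1 : ℝ) * t) := hSbound t ht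
      have h2 : max 0 (f1 0 + f2 0 + (K2 : ℝ) * (K1 : ℝ) * t)
          ≤ max 0 (f1 0 + f2 0 + (K2 : ℝ) * (K1 : ℝ) * (K3 : ℝ)) := by
        apply max_le_max (le_refl 0)
        have : (K2 : ℝ) * (K1 : ℝ) * t ≤ (K2 : ℝ) * (K1 : ℝ) * (K3 : ℝ) :=
          mul_le_mul_of_nonneg_left ht3 (by positivity)
        linarith
      have h3 : f3 0 + max 0 (f1 0 + f2 0 + (K2 : ℝ) * (K1 : ℝ) * (K3 : ℝ)) ≤ C :=
        le_max_right _ _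
      rw [zero_mul] at h0
      linarith
    · rw [hg]
      simp only
      rw [Real.iInf_of_not_bddBelow hb]
      exact le_max_left _ _
  have hgBddA : BddAbove (Set.range fun q3 : {q : ℝ // 0 ≤ q} => g q3.1) :=
    ⟨C, by rintro x ⟨q3, rfl⟩; exact hgbound q3.1 q3.2⟩
  -- the RHS is nonnegative
  have hg0 : g ((K3 : ℝ) + 1) = 0 := by
    rw [hg]
    simp only
    apply Real.iInf_of_not_bddBelow
    refine not_bddBelow_of_le _ (f3 0 + S ((K3 : ℝ) + 1)) (-1) (by norm_num) (fun r => ?_)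
    have := lip_ub hK3 r.2
    nlinarith
  have hRHS0 : (0:ℝ) ≤ ⨆ q3 : {q : ℝ // 0 ≤ q}, g q3.1 := by
    have := le_ciSup hgBddA (⟨(K3 : ℝ) + 1, by positivity⟩ : {q : ℝ // 0 ≤ q})
    rw [hg0] at this
    exact this
  show sSup _ ≤ ⨆ q3 : {q : ℝ // 0 ≤ q}, g q3.1
  refine Real.sSup_le ?_ hRHS0
  rintro y ⟨q1, q2, q3, hq1, hq2, hq3, e1, e2, e3, rfl⟩
  -- Step A : lower bound for S q3
  have hA : f1 (q2 * q3) + f2 (q1 * q3) - q1 * q2 * q3 ≤ S q3 := by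
    refine le_trans (le_ciInf fun q2' => ?_) (le_ciSup (hSbddA q3 hq3) ⟨q1, hq1⟩)
    have hsub := subgrad h1_conv (mul_nonneg hq2 hq3) (mul_nonneg q2'.2 hq3)
      (h1_deriv _ (mem_Ici.2 (mul_nonneg hq2 hq3)))
    rw [← e1] at hsub
    nlinarith
  -- Step B : the value is below g q3
  have hB : f1 (q2 * q3) + f2 (q1 * q3) + f3 (q1 * q2) - 2 * (q1 * q2 * q3) ≤ g q3 := by
    refine le_ciInf fun r => ?_
    have hsub := subgrad h3_conv (mul_nonneg hq1 hq2) r.2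
      (h3_deriv _ (mem_Ici.2 (mul_nonneg hq1 hq2)))
    rw [← e3] at hsub
    nlinarith
  exact hB.trans (le_ciSup hgBddA ⟨q3, hq3⟩)
end
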